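/- Let S be a symmetric numerical semigroup and let x∈S be nonzero. Then β_i(x) = β_{d(x)−i}(x) for all 0 ≤ i ≤ ⌊(d(x)+1)/2⌋ if and only if S is M-pure with respect to x. -/

import Mathlib

open scoped Pointwise

/-- `S ⊆ ℕ` is a numerical semigroup: it contains `0`, is closed under
addition, and has finite complement in `ℕ`. -/
def IsNumSgp (S : Set ℕ) : Prop :=
  (0 : ℕ) ∈ S ∧ (∀ a ∈ S, ∀ b ∈ S, a + b ∈ S) ∧ {x : ℕ | x ∉ S}.Finite

/-- `nM S t` is the `t`-fold sumset of the maximal ideal `M = S \ {0}`,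
with the convention `nM S 0 = S`. -/
def nM (S : Set ℕ) : ℕ → Set ℕ
  | 0 => S
  | t + 1 => (S \ {0}) + nM S t

/-- the order of `s` with respect to `S` : the largest `t` with `s ∈ tM`. -/
noncomputable def ordS (S : Set ℕ) (s : ℕ) : ℕ := sSup {t : ℕ | s ∈ nM S t}

/-- the multiplicity of `S` : its least nonzero element. -/
noncomputable def mult (S : Set ℕ) : ℕ := sInf {x : ℕ | x ∈ S ∧ x ≠ 0}

/-- the Apéry set of `S` with respect to `x` : elements `s ∈ S` with `s - x ∉ S`. -/
def Ap (S : Set ℕ) (x : ℕ) : Set ℕ := {s : ℕ | s ∈ S ∧ ¬ ∃ t ∈ S, s = t + x}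

/-- membership of an integer in (the image in `ℤ` of) `S`. -/
def zmem (S : Set ℕ) (z : ℤ) : Prop := ∃ t ∈ S, (t : ℤ) = z

/-- the Frobenius number of `S` : the largest integer not in `S`. -/
noncomputable def Frob (S : Set ℕ) : ℤ := sSup {z : ℤ | ¬ zmem S z}

/-- `S` is symmetric: for every integer `z`, `z ∈ S` iff `F(S) - z ∉ S`. -/
def IsSymmetric (S : Set ℕ) : Prop := ∀ z : ℤ, zmem S z ↔ ¬ zmem S (Frob S - z)

/-- the set of maximal elements of `Ap S x` with respect to the order
`u ⪯ v` iff `v = u + z` for some `z ∈ S`. -/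
def MaxAp (S : Set ℕ) (x : ℕ) : Set ℕ :=
  {w : ℕ | w ∈ Ap S x ∧ ∀ y ∈ Ap S x, (∃ z ∈ S, y = w + z) → y = w}

/-- the set of maximal elements of `Ap S x` with respect to the order
`u ⪯_M v` iff `v = u + z` for some `z ∈ S` with `ord(v) = ord(u) + ord(z)`. -/
def MaxMAp (S : Set ℕ) (x : ℕ) : Set ℕ :=
  {w : ℕ | w ∈ Ap S x ∧ ∀ y ∈ Ap S x,
    (∃ z ∈ S, y = w + z ∧ ordS S y = ordS S w + ordS S z) → y = w}

/-- `S` is M-pure with respect to `x` : all maximal elements of `Ap S x`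
under `⪯_M` have the same order. -/
def MPureWrt (S : Set ℕ) (x : ℕ) : Prop :=
  ∀ w ∈ MaxMAp S x, ∀ w' ∈ MaxMAp S x, ordS S w = ordS S w'

/-- `S` is M-pure : it is M-pure with respect to its multiplicity. -/
def MPure (S : Set ℕ) : Prop := MPureWrt S (mult S)

/-- `β_i(x)` : the number of elements of `Ap S x` of order `i`. -/
noncomputable def betaS (S : Set ℕ) (x i : ℕ) : ℕ := {w ∈ Ap S x | ordS S w = i}.ncard

/-- `d(x)` : the maximal order of an element of `Ap S x`. -/
noncomputable def dS (S : Set ℕ) (x : ℕ) : ℕ := sSup (ordS S '' Ap S x)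

/-- the reduction number of `S` : the least `r` with `(r+1)M = m(S) + rM`. -/
noncomputable def redNum (S : Set ℕ) : ℕ :=
  sInf {r : ℕ | nM S (r + 1) = (fun y => mult S + y) '' nM S r}

/-- `l_x(S) = max { ord(s+x) - ord(x) - ord(s) : s ∈ S, ord(s) ≤ r }`. -/
noncomputable def lS (S : Set ℕ) (x : ℕ) : ℕ :=
  sSup {t : ℕ | ∃ s ∈ S, ordS S s ≤ redNum S ∧ t = ordS S (s + x) - ordS S x - ordS S s}

/-- the Hilbert function of `S`. -/
noncomputable def HilbS (S : Set ℕ) (t : ℕ) : ℕ := (nM S t \ nM S (t + 1)).ncard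

/-- The data of a gluing `S = ⟨q m₁, …, q m_d, p n₁, …, p n_k⟩` of two numerical
semigroups `S₁ = ⟨m₁, …, m_d⟩` and `S₂ = ⟨n₁, …, n_k⟩`, minimally generated by
`m₁ < ⋯ < m_d` and `n₁ < ⋯ < n_k`, where `p ∈ S₁ \ {m₁, …, m_d}`,
`q ∈ S₂ \ {n₁, …, n_k}` and `gcd(p, q) = 1`. -/
structure Gluing where
  d : ℕ
  k : ℕ
  hd : 0 < d
  hk : 0 < k
  m : Fin d → ℕ
  n : Fin k → ℕ
  p : ℕ
  q : ℕ
  hm : StrictMono m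
  hn : StrictMono n
  hmin₁ : ∀ i, m i ∉ AddSubmonoid.closure (Set.range m \ {m i})
  hmin₂ : ∀ j, n j ∉ AddSubmonoid.closure (Set.range n \ {n j})
  hnum₁ : IsNumSgp (AddSubmonoid.closure (Set.range m) : Set ℕ)
  hnum₂ : IsNumSgp (AddSubmonoid.closure (Set.range n) : Set ℕ)
  hp : p ∈ AddSubmonoid.closure (Set.range m)
  hq : q ∈ AddSubmonoid.closure (Set.range n)
  hpm : p ∉ Set.range m
  hqn : q ∉ Set.range n
  hpq : Nat.gcd p q = 1

/-- the numerical semigroup `S₁ = ⟨m₁, …, m_d⟩`. -/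
def Gluing.S₁ (G : Gluing) : Set ℕ := (AddSubmonoid.closure (Set.range G.m) : Set ℕ)

/-- the numerical semigroup `S₂ = ⟨n₁, …, n_k⟩`. -/
def Gluing.S₂ (G : Gluing) : Set ℕ := (AddSubmonoid.closure (Set.range G.n) : Set ℕ)

/-- the glued numerical semigroup `S = ⟨q m₁, …, q m_d, p n₁, …, p n_k⟩`. -/
def Gluing.S (G : Gluing) : Set ℕ :=
  (AddSubmonoid.closure
    ((fun x => G.q * x) '' Set.range G.m ∪ (fun x => G.p * x) '' Set.range G.n) : Set ℕ)

/-- the smallest generator `m₁` of `S₁`. -/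
def Gluing.m₁ (G : Gluing) : ℕ := G.m ⟨0, G.hd⟩

/-- the smallest generator `n₁` of `S₂`. -/
def Gluing.n₁ (G : Gluing) : ℕ := G.n ⟨0, G.hk⟩

/-- the gluing is specific if `ord_{S₂}(q) + l_q(S₂) ≤ ord_{S₁}(p)`. -/
def Gluing.Specific (G : Gluing) : Prop := ordS G.S₂ G.q + lS G.S₂ G.q ≤ ordS G.S₁ G.p

/-- the gluing is nice if `q = a n₁` for some `1 < a ≤ ord_{S₁}(p)`. -/
def Gluing.Nice (G : Gluing) : Prop := ∃ a : ℕ, 1 < a ∧ a ≤ ordS G.S₁ G.p ∧ G.q = a * G.n₁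


section Aux

variable {S : Set ℕ}

lemma nM_succ_def (t : ℕ) : nM S (t+1) = (S \ {0}) + nM S t := rfl

lemma nM_subset (hS : IsNumSgp S) : ∀ t, nM S t ⊆ S
  | 0 => subset_rfl
  | (t+1) => by
      rintro s hs
      rw [nM_succ_def, Set.mem_add] at hs
      obtain ⟨a, ha, b, hb, rfl⟩ := hs
      exact hS.2.1 a ha.1 b (nM_subset hS t hb)

lemma add_mem_nM (hS : IsNumSgp S) {a b : ℕ} (ha : a ∈ S) :
    ∀ t, b ∈ nM S t → a + b ∈ nM S t
  | 0, hb => hS.2.1 a ha b hb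
  | (t+1), hb => by
      rw [nM_succ_def, Set.mem_add] at hb ⊢
      obtain ⟨m, hm, c, hc, rfl⟩ := hb
      exact ⟨m, hm, a + c, add_mem_nM hS ha t hc, by ring⟩

lemma nM_succ_subset (hS : IsNumSgp S) (t : ℕ) : nM S (t+1) ⊆ nM S t := by
  rintro s hs
  rw [nM_succ_def, Set.mem_add] at hs
  obtain ⟨a, ha, b, hb, rfl⟩ := hs
  exact add_mem_nM hS ha.1 t hb

lemma nM_subset_of_le (hS : IsNumSgp S) {t t' : ℕ} (h : t' ≤ t) : nM S t ⊆ nM S t' := by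
  induction h with
  | refl => exact subset_rfl
  | step h ih => exact fun s hs => ih (nM_succ_subset hS _ hs)

lemma nM_add (hS : IsNumSgp S) {a b : ℕ} :
    ∀ p q, a ∈ nM S p → b ∈ nM S q → a + b ∈ nM S (p + q)
  | 0, q, ha, hb => by simpa using add_mem_nM hS ha q hb
  | (p+1), q, ha, hb => by
      rw [nM_succ_def, Set.mem_add] at ha
      obtain ⟨m, hm, c, hc, rfl⟩ := ha
      have : c + b ∈ nM S (p + q) := nM_add hS p q hc hb
      have : m + (c + b) ∈ nM S (p + q + 1) := by
        rw [nM_succ_def, Set.mem_add]; exact ⟨m, hm, c + b, this, rfl⟩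
      have he : p + 1 + q = p + q + 1 := by ring
      rw [he]
      convert this using 1
      ring

lemma le_of_mem_nM : ∀ {t s : ℕ}, s ∈ nM S t → t ≤ s := by
  intro t
  induction t with
  | zero => intro s _; exact Nat.zero_le s
  | succ t ih =>
      intro s hs
      rw [nM_succ_def, Set.mem_add] at hs
      obtain ⟨a, ha, b, hb, rfl⟩ := hs
      have h1 : 1 ≤ a := Nat.one_le_iff_ne_zero.2 ha.2
      have := ih hb
      omega

lemma ordS_le_self (s : ℕ) : ordS S s ≤ s :=
  csSup_le' (fun t ht => le_of_mem_nM ht)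

lemma mem_nM_ordS (hs : s ∈ S) : s ∈ nM S (ordS S s) := by
  have hne : ({t : ℕ | s ∈ nM S t}).Nonempty := ⟨0, hs⟩
  have hbdd : BddAbove {t : ℕ | s ∈ nM S t} := ⟨s, fun t ht => le_of_mem_nM ht⟩
  exact Nat.sSup_mem hne hbdd

lemma mem_nM_iff_le_ordS (hS : IsNumSgp S) {s : ℕ} (hs : s ∈ S) (t : ℕ) :
    s ∈ nM S t ↔ t ≤ ordS S s := by
  constructor
  · intro h
    exact le_csSup ⟨s, fun u hu => le_of_mem_nM hu⟩ h
  · intro h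
    exact nM_subset_of_le hS h (mem_nM_ordS hs)

lemma ordS_superadd (hS : IsNumSgp S) {a b : ℕ} (ha : a ∈ S) (hb : b ∈ S) :
    ordS S a + ordS S b ≤ ordS S (a + b) := by
  rw [← mem_nM_iff_le_ordS hS (hS.2.1 a ha b hb)]
  exact nM_add hS _ _ (mem_nM_ordS ha) (mem_nM_ordS hb)

lemma ordS_pos (hS : IsNumSgp S) {s : ℕ} (hs : s ∈ S) (hs0 : s ≠ 0) : 1 ≤ ordS S s := by
  rw [← mem_nM_iff_le_ordS hS hs]
  rw [nM_succ_def, Set.mem_add]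
  exact ⟨s, ⟨hs, hs0⟩, 0, hS.1, add_zero s⟩

lemma ordS_zero : ordS S 0 = 0 :=
  Nat.le_zero.mp (ordS_le_self 0)

lemma zmem_natCast {n : ℕ} : zmem S (n : ℤ) ↔ n ∈ S := by
  constructor
  · rintro ⟨t, ht, hteq⟩
    have : t = n := by exact_mod_cast hteq
    rwa [this] at ht
  · intro h; exact ⟨n, h, rfl⟩

lemma exists_bound (hS : IsNumSgp S) : ∃ N : ℕ, ∀ n : ℕ, N ≤ n → n ∈ S := by
  obtain ⟨B, hB⟩ := hS.2.2.bddAbove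
  refine ⟨B + 1, fun n hn => ?_⟩
  by_contra h
  have : n ≤ B := hB h
  omega

lemma frob_nonmem_set_nonempty : ({z : ℤ | ¬ zmem S z}).Nonempty := by
  refine ⟨-1, ?_⟩
  rintro ⟨t, _, hteq⟩
  omega

lemma frob_nonmem_set_bddAbove (hS : IsNumSgp S) : BddAbove {z : ℤ | ¬ zmem S z} := by
  obtain ⟨N, hN⟩ := exists_bound hS
  refine ⟨(N : ℤ), fun z hz => ?_⟩
  by_contra h
  push_neg at h
  have hz0 : 0 ≤ z := by omega
  have : z.toNat ∈ S := hN z.toNat (by omega)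
  exact hz ⟨z.toNat, this, by omega⟩

lemma not_zmem_frob (hS : IsNumSgp S) : ¬ zmem S (Frob S) :=
  Int.csSup_mem frob_nonmem_set_nonempty (frob_nonmem_set_bddAbove hS)

lemma le_frob (hS : IsNumSgp S) {z : ℤ} (hz : ¬ zmem S z) : z ≤ Frob S :=
  le_csSup (frob_nonmem_set_bddAbove hS) hz

lemma zmem_of_frob_lt (hS : IsNumSgp S) {z : ℤ} (hz : Frob S < z) : zmem S z := by
  by_contra h
  exact absurd (le_frob hS h) (not_le.mpr hz)

lemma neg_one_le_frob (hS : IsNumSgp S) : (-1 : ℤ) ≤ Frob S :=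
  le_frob hS (by rintro ⟨t, _, hteq⟩; omega)

end Aux


section ApAux

variable {S : Set ℕ} {x : ℕ}

/-- For `w` in the Apéry set, `w - x` is not in (the ℤ-image of) `S`. -/
lemma not_zmem_sub_of_mem_Ap (hw : w ∈ Ap S x) : ¬ zmem S ((w : ℤ) - x) := by
  rintro ⟨t, ht, hteq⟩
  exact hw.2 ⟨t, ht, by omega⟩

/-- Every element of the Apéry set is at most `Frob S + x` (as an integer). -/
lemma Ap_le_frob_add (hS : IsNumSgp S) (hw : w ∈ Ap S x) : (w : ℤ) ≤ Frob S + x := by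
  have := le_frob hS (not_zmem_sub_of_mem_Ap hw)
  omega

lemma zero_mem_Ap (hS : IsNumSgp S) (hx0 : x ≠ 0) : 0 ∈ Ap S x := by
  refine ⟨hS.1, ?_⟩
  rintro ⟨t, _, hteq⟩
  omega

lemma Ap_subset (S : Set ℕ) (x : ℕ) : Ap S x ⊆ S := fun _ h => h.1

/-- Existence of the natural number `f` with `f = Frob S + x`. -/
lemma exists_fN (hS : IsNumSgp S) (hx0 : x ≠ 0) : ∃ f : ℕ, (f : ℤ) = Frob S + x := by
  have h1 := neg_one_le_frob (S := S) hS
  refine ⟨(Frob S + x).toNat, ?_⟩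
  have hx1 : (1 : ℤ) ≤ x := by exact_mod_cast Nat.one_le_iff_ne_zero.2 hx0
  omega

section WithF

variable {f : ℕ} (hS : IsNumSgp S) (hsym : IsSymmetric S)
  (hf : (f : ℤ) = Frob S + x)

include hS hsym hf

lemma Ap_le_f (hw : w ∈ Ap S x) : w ≤ f := by
  have := Ap_le_frob_add hS hw
  omega

lemma sigma_mem_Ap (hw : w ∈ Ap S x) : f - w ∈ Ap S x := by
  have hwf : w ≤ f := Ap_le_f hS hsym hf hw
  have hcast : ((f - w : ℕ) : ℤ) = (f : ℤ) - w := by omega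
  constructor
  · -- f - w ∈ S
    rw [← zmem_natCast (S := S)]
    rw [hcast]
    rw [hsym ((f : ℤ) - w)]
    have heq : Frob S - ((f : ℤ) - w) = (w : ℤ) - x := by omega
    rw [heq]
    exact not_zmem_sub_of_mem_Ap hw
  · -- ¬ ∃ t ∈ S, f - w = t + x
    rintro ⟨t, ht, hteq⟩
    have hz : zmem S ((t : ℕ) : ℤ) := zmem_natCast.2 ht
    have hw' : zmem S ((w : ℕ) : ℤ) := zmem_natCast.2 hw.1
    have := (hsym (w : ℤ)).1 hw'
    apply this
    have heq : Frob S - (w : ℤ) = (t : ℤ) := by omega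
    rw [heq]
    exact hz

lemma f_mem_Ap (hx0 : x ≠ 0) : f ∈ Ap S x := by
  have h0 : (0 : ℕ) ∈ Ap S x := zero_mem_Ap hS hx0
  have := sigma_mem_Ap hS hsym hf h0
  simpa using this

lemma Ap_finite : (Ap S x).Finite :=
  Set.Finite.subset (Set.finite_Iic f) (fun w hw => Ap_le_f hS hsym hf hw)

end WithF

end ApAux


section MainAux

variable {S : Set ℕ} {x f : ℕ}

lemma ordS_le_dS (hS : IsNumSgp S) (hsym : IsSymmetric S) (hf : (f : ℤ) = Frob S + x)
    {w : ℕ} (hw : w ∈ Ap S x) : ordS S w ≤ dS S x := by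
  have hfin : ((ordS S) '' Ap S x).Finite := (Ap_finite hS hsym hf).image _
  exact le_csSup hfin.bddAbove ⟨w, hw, rfl⟩

lemma exists_ord_eq_dS (hS : IsNumSgp S) (hsym : IsSymmetric S) (hx0 : x ≠ 0)
    (hf : (f : ℤ) = Frob S + x) : ∃ w ∈ Ap S x, ordS S w = dS S x := by
  have hne : ((ordS S) '' Ap S x).Nonempty := ⟨ordS S 0, 0, zero_mem_Ap hS hx0, rfl⟩
  have hfin : ((ordS S) '' Ap S x).Finite := (Ap_finite hS hsym hf).image _
  have := Nat.sSup_mem hne hfin.bddAbove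
  obtain ⟨w, hw, hweq⟩ := this
  exact ⟨w, hw, hweq⟩

lemma ord_add_ord_sub_le (hS : IsNumSgp S) (hsym : IsSymmetric S) (hx0 : x ≠ 0)
    (hf : (f : ℤ) = Frob S + x) {w : ℕ} (hw : w ∈ Ap S x) :
    ordS S w + ordS S (f - w) ≤ dS S x := by
  have hwf : w ≤ f := Ap_le_f hS hsym hf hw
  have hσ : f - w ∈ Ap S x := sigma_mem_Ap hS hsym hf hw
  have h1 := ordS_superadd hS hw.1 hσ.1
  have he : w + (f - w) = f := by omega
  rw [he] at h1
  exact h1.trans (ordS_le_dS hS hsym hf (f_mem_Ap hS hsym hf hx0))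

lemma sigma_injOn (hS : IsNumSgp S) (hsym : IsSymmetric S) (hf : (f : ℤ) = Frob S + x) :
    Set.InjOn (fun w => f - w) (Ap S x) := by
  intro a ha b hb hab
  have h1 : a ≤ f := Ap_le_f hS hsym hf ha
  have h2 : b ≤ f := Ap_le_f hS hsym hf hb
  have hab' : f - a = f - b := hab
  omega

lemma exists_maxM_above (hS : IsNumSgp S) (hsym : IsSymmetric S)
    (hf : (f : ℤ) = Frob S + x) {w : ℕ} (hw : w ∈ Ap S x) :
    ∃ w' ∈ MaxMAp S x, ∃ z ∈ S, w' = w + z ∧ ordS S w' = ordS S w + ordS S z := by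
  set T := {y ∈ Ap S x | ∃ z ∈ S, y = w + z ∧ ordS S y = ordS S w + ordS S z} with hT
  have hTfin : T.Finite := (Ap_finite hS hsym hf).subset (fun y hy => hy.1)
  have hTne : T.Nonempty := ⟨w, hw, 0, hS.1, by simp [ordS_zero]⟩
  obtain ⟨w', hw'T, hmax⟩ : ∃ a ∈ T, ∀ a' ∈ T, id a ≤ id a' → id a = id a' := by
    obtain ⟨a, ha, h⟩ := hTfin.exists_maximalFor id T hTne
    exact ⟨a, ha, fun a' ha' hle => le_antisymm hle (h ha' hle)⟩
  obtain ⟨hw'Ap, z₀, hz₀S, hw'eq, hw'ord⟩ := hw'T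
  refine ⟨w', ⟨hw'Ap, ?_⟩, z₀, hz₀S, hw'eq, hw'ord⟩
  rintro y hy ⟨z, hzS, hyeq, hyord⟩
  have hyT : y ∈ T := by
    refine ⟨hy, z₀ + z, hS.2.1 _ hz₀S _ hzS, by omega, ?_⟩
    have h1 : ordS S z₀ + ordS S z ≤ ordS S (z₀ + z) := ordS_superadd hS hz₀S hzS
    have h2 : ordS S w + ordS S (z₀ + z) ≤ ordS S y := by
      have := ordS_superadd hS hw.1 (hS.2.1 _ hz₀S _ hzS)
      have he : w + (z₀ + z) = y := by omega
      rwa [he] at this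
    omega
  have : w' = y := hmax y hyT (by simp [hyeq, Nat.le_add_right])
  omega

lemma f_mem_MaxMAp (hS : IsNumSgp S) (hsym : IsSymmetric S) (hx0 : x ≠ 0)
    (hf : (f : ℤ) = Frob S + x) : f ∈ MaxMAp S x := by
  refine ⟨f_mem_Ap hS hsym hf hx0, ?_⟩
  rintro y hy ⟨z, hzS, hyeq, -⟩
  have : y ≤ f := Ap_le_f hS hsym hf hy
  omega

lemma maxM_of_ord_eq_d (hS : IsNumSgp S) (hsym : IsSymmetric S)
    (hf : (f : ℤ) = Frob S + x) {w : ℕ} (hw : w ∈ Ap S x) (hd : ordS S w = dS S x) :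
    w ∈ MaxMAp S x := by
  refine ⟨hw, ?_⟩
  rintro y hy ⟨z, hzS, hyeq, hyord⟩
  have h1 : ordS S y ≤ dS S x := ordS_le_dS hS hsym hf hy
  have hz0 : ordS S z = 0 := by omega
  have : z = 0 := by
    by_contra hz
    have := ordS_pos hS hzS hz
    omega
  omega

/-- The key property `P`: every Apéry element pairs with its mirror to total order `d`. -/
def Pprop (S : Set ℕ) (x f : ℕ) : Prop :=
  ∀ w ∈ Ap S x, ordS S w + ordS S (f - w) = dS S x

lemma mpure_to_P (hS : IsNumSgp S) (hsym : IsSymmetric S) (hx0 : x ≠ 0)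
    (hf : (f : ℤ) = Frob S + x) (hpure : MPureWrt S x) : Pprop S x f := by
  obtain ⟨wd, hwd, hwdord⟩ := exists_ord_eq_dS hS hsym hx0 hf
  have hwdM : wd ∈ MaxMAp S x := maxM_of_ord_eq_d hS hsym hf hwd hwdord
  have hfM : f ∈ MaxMAp S x := f_mem_MaxMAp hS hsym hx0 hf
  have hford : ordS S f = dS S x := by
    have := hpure f hfM wd hwdM
    omega
  intro w hw
  obtain ⟨w', hw'M, z, hzS, hw'eq, hw'ord⟩ := exists_maxM_above hS hsym hf hw
  have hw'd : ordS S w' = dS S x := by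
    have := hpure w' hw'M f hfM
    omega
  have hw'f : w' ≤ f := Ap_le_f hS hsym hf hw'M.1
  have hwf : w ≤ f := Ap_le_f hS hsym hf hw
  have hσw' : f - w' ∈ Ap S x := sigma_mem_Ap hS hsym hf hw'M.1
  have hkey : f - w = (f - w') + z := by omega
  have h1 : ordS S (f - w') + ordS S z ≤ ordS S (f - w) := by
    have := ordS_superadd hS hσw'.1 hzS
    rwa [← hkey] at this
  have h2 := ord_add_ord_sub_le hS hsym hx0 hf hw
  have h3 : ordS S w ≤ dS S x := ordS_le_dS hS hsym hf hw
  omega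

lemma P_ord_f (hS : IsNumSgp S) (hsym : IsSymmetric S) (hx0 : x ≠ 0)
    (hf : (f : ℤ) = Frob S + x) (hP : Pprop S x f) : ordS S f = dS S x := by
  have hfAp : f ∈ Ap S x := f_mem_Ap hS hsym hf hx0
  have := hP f hfAp
  simpa [Nat.sub_self, ordS_zero] using this

lemma P_to_mpure (hS : IsNumSgp S) (hsym : IsSymmetric S) (hx0 : x ≠ 0)
    (hf : (f : ℤ) = Frob S + x) (hP : Pprop S x f) : MPureWrt S x := by
  have hford := P_ord_f hS hsym hx0 hf hP
  have hkey : ∀ w ∈ MaxMAp S x, w = f := by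
    intro w hwM
    have hwAp := hwM.1
    have hwf : w ≤ f := Ap_le_f hS hsym hf hwAp
    have hσ : f - w ∈ Ap S x := sigma_mem_Ap hS hsym hf hwAp
    exact (hwM.2 f (f_mem_Ap hS hsym hf hx0)
      ⟨f - w, hσ.1, by omega, by rw [hford, ← hP w hwAp]⟩).symm
  intro w hw w' hw'
  rw [hkey w hw, hkey w' hw']

lemma P_to_beta (hS : IsNumSgp S) (hsym : IsSymmetric S) (hx0 : x ≠ 0)
    (hf : (f : ℤ) = Frob S + x) (hP : Pprop S x f) :
    ∀ i ≤ dS S x, betaS S x i = betaS S x (dS S x - i) := by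
  intro i hi
  have hApfin := Ap_finite hS hsym hf
  have hinj := sigma_injOn hS hsym hf
  have hfin : ∀ j : ℕ, ({w ∈ Ap S x | ordS S w = j}).Finite :=
    fun j => hApfin.subset (fun w hw => hw.1)
  have hmaps : ∀ j k : ℕ, j + k = dS S x →
      ∀ w ∈ {w ∈ Ap S x | ordS S w = j}, f - w ∈ {w ∈ Ap S x | ordS S w = k} := by
    intro j k hjk w hw
    refine ⟨sigma_mem_Ap hS hsym hf hw.1, ?_⟩
    have h1 := hP w hw.1
    have h2 : ordS S w = j := hw.2
    show ordS S (f - w) = k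
    omega
  have hle : ∀ j k : ℕ, j + k = dS S x →
      ({w ∈ Ap S x | ordS S w = j}).ncard ≤ ({w ∈ Ap S x | ordS S w = k}).ncard := by
    intro j k hjk
    exact Set.ncard_le_ncard_of_injOn _ (hmaps j k hjk)
      (hinj.mono (fun w hw => hw.1)) (hfin k)
  have h1 : i + (dS S x - i) = dS S x := by omega
  have h2 : (dS S x - i) + i = dS S x := by omega
  exact le_antisymm (hle _ _ h1) (hle _ _ h2)

lemma beta_to_P (hS : IsNumSgp S) (hsym : IsSymmetric S) (hx0 : x ≠ 0)
    (hf : (f : ℤ) = Frob S + x)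
    (hbeta : ∀ i : ℕ, i ≤ (dS S x + 1) / 2 → betaS S x i = betaS S x (dS S x - i)) :
    Pprop S x f := by
  set d := dS S x with hd
  have hApfin := Ap_finite hS hsym hf
  have hinj := sigma_injOn hS hsym hf
  -- full beta symmetry
  have hfull : ∀ j ≤ d, betaS S x j = betaS S x (d - j) := by
    intro j hj
    by_cases h : j ≤ (d + 1) / 2
    · exact hbeta j h
    · have h1 : d - j ≤ (d + 1) / 2 := by omega
      have h2 := hbeta (d - j) h1
      have h3 : d - (d - j) = j := by omega
      rw [h3] at h2
      exact h2.symm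
  -- level sets
  set E : ℕ → Set ℕ := fun j => {w ∈ Ap S x | ordS S w = j} with hE
  set G : ℕ → Set ℕ := fun n => {w ∈ Ap S x | ordS S w ≤ n} with hG
  set H : ℕ → Set ℕ := fun m => {w ∈ Ap S x | m ≤ ordS S w} with hH
  have hEfin : ∀ j, (E j).Finite := fun j => hApfin.subset (fun w hw => hw.1)
  have hGfin : ∀ n, (G n).Finite := fun n => hApfin.subset (fun w hw => hw.1)
  have hHfin : ∀ m, (H m).Finite := fun m => hApfin.subset (fun w hw => hw.1)
  have hEcard : ∀ j, (E j).ncard = betaS S x j := fun j => rfl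
  -- counting lemma
  have hT : ∀ n ≤ d, (H (d - n)).ncard = (G n).ncard := by
    intro n
    induction n with
    | zero =>
        intro _
        have he1 : H (d - 0) = E d := by
          ext w
          simp only [hH, hE, Set.mem_setOf_eq, Nat.sub_zero]
          constructor
          · rintro ⟨hw, hord⟩
            exact ⟨hw, le_antisymm (ordS_le_dS hS hsym hf hw) hord⟩
          · rintro ⟨hw, hord⟩
            exact ⟨hw, hord.ge⟩
        have he2 : G 0 = E 0 := by
          ext w
          simp only [hG, hE, Set.mem_setOf_eq, Nat.le_zero]
        rw [he1, he2, hEcard, hEcard]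
        have := hfull d le_rfl
        simp only [Nat.sub_self] at this
        exact this
    | succ n ih =>
        intro hn1
        have hn : n ≤ d := by omega
        have ihn := ih hn
        have hdec1 : H (d - (n + 1)) = E (d - (n + 1)) ∪ H (d - n) := by
          ext w
          simp only [hH, hE, Set.mem_setOf_eq, Set.mem_union]
          constructor
          · rintro ⟨hw, hord⟩
            by_cases hcase : ordS S w = d - (n + 1)
            · exact Or.inl ⟨hw, hcase⟩
            · exact Or.inr ⟨hw, by omega⟩
          · rintro (⟨hw, hord⟩ | ⟨hw, hord⟩)
            · exact ⟨hw, by omega⟩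
            · exact ⟨hw, by omega⟩
        have hdisj1 : Disjoint (E (d - (n + 1))) (H (d - n)) := by
          rw [Set.disjoint_left]
          rintro w ⟨hw, hord⟩ ⟨hw', hord'⟩
          omega
        have hdec2 : G (n + 1) = E (n + 1) ∪ G n := by
          ext w
          simp only [hG, hE, Set.mem_setOf_eq, Set.mem_union]
          constructor
          · rintro ⟨hw, hord⟩
            by_cases hcase : ordS S w = n + 1
            · exact Or.inl ⟨hw, hcase⟩
            · exact Or.inr ⟨hw, by omega⟩
          · rintro (⟨hw, hord⟩ | ⟨hw, hord⟩)
            · exact ⟨hw, by omega⟩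
            · exact ⟨hw, by omega⟩
        have hdisj2 : Disjoint (E (n + 1)) (G n) := by
          rw [Set.disjoint_left]
          rintro w ⟨hw, hord⟩ ⟨hw', hord'⟩
          omega
        rw [hdec1, hdec2, Set.ncard_union_eq hdisj1 (hEfin _) (hHfin _),
          Set.ncard_union_eq hdisj2 (hEfin _) (hGfin _)]
        have hb : (E (d - (n + 1))).ncard = (E (n + 1)).ncard := by
          rw [hEcard, hEcard]
          exact (hfull (n + 1) hn1).symm
        omega
  -- surjectivity
  have hsurj : ∀ i ≤ d, (fun w => f - w) '' (H i) = G (d - i) := by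
    intro i hi
    have hsub : (fun w => f - w) '' (H i) ⊆ G (d - i) := by
      rintro _ ⟨w, ⟨hw, hord⟩, rfl⟩
      refine ⟨sigma_mem_Ap hS hsym hf hw, ?_⟩
      have h1 := ord_add_ord_sub_le hS hsym hx0 hf hw
      show ordS S (f - w) ≤ d - i
      omega
    have hcard1 : ((fun w => f - w) '' (H i)).ncard = (H i).ncard :=
      Set.ncard_image_of_injOn (hinj.mono (fun w hw => hw.1))
    have hcard2 : (H i).ncard = (G (d - i)).ncard := by
      have := hT (d - i) (by omega)
      have he : d - (d - i) = i := by omega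
      rwa [he] at this
    exact Set.eq_of_subset_of_ncard_le hsub (by omega) (hGfin _)
  -- conclude P
  intro w hw
  have hwd : ordS S w ≤ d := ordS_le_dS hS hsym hf hw
  have hle := ord_add_ord_sub_le hS hsym hx0 hf hw
  by_contra hne
  have hlt : ordS S (f - w) < d - ordS S w := by omega
  have hi1 : ordS S w + 1 ≤ d := by omega
  have hmem : f - w ∈ G (d - (ordS S w + 1)) := by
    refine ⟨sigma_mem_Ap hS hsym hf hw, ?_⟩
    omega
  rw [← hsurj (ordS S w + 1) hi1] at hmem
  obtain ⟨u, ⟨huAp, huord⟩, hueq⟩ := hmem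
  have hu : u = w := hinj huAp hw hueq
  rw [hu] at huord
  omega

end MainAux

/-- for a symmetric numerical semigroup `S` and nonzero `x ∈ S`,
`β_i(x) = β_{d(x)-i}(x)` for all `0 ≤ i ≤ ⌊(d(x)+1)/2⌋` iff `S` is M-pure
with respect to `x`. -/
theorem stmt4 (S : Set ℕ) (hS : IsNumSgp S) (hsym : IsSymmetric S)
    (x : ℕ) (hx : x ∈ S) (hx0 : x ≠ 0) :
    (∀ i : ℕ, i ≤ (dS S x + 1) / 2 → betaS S x i = betaS S x (dS S x - i)) ↔
      MPureWrt S x := by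
  obtain ⟨f, hf⟩ := exists_fN hS hx0
  constructor
  · intro hbeta
    exact P_to_mpure hS hsym hx0 hf (beta_to_P hS hsym hx0 hf hbeta)
  · intro hpure i hi
    have hP := mpure_to_P hS hsym hx0 hf hpure
    have hid : i ≤ dS S x := by omega
    exact P_to_beta hS hsym hx0 hf hP i hid
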